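/- Let K be a field, n, d integers with 1 ≤ d ≤ n − d, and let V_{(n−d,d)} ⊆ R be the K-linear span of the Specht polynomials f_T for all Young tableaux T of shape (n−d, d). For every nonzero f ∈ V_{(n−d,d)} there exists a unique standard Young tableau T of shape (n−d, d) such that init(f) = init(f_T), where init denotes the initial monomial with respect to the lexicographic order with x_n ≻ x_{n−1} ≻ ⋯ ≻ x_1. -/

import Mathlib

open MvPolynomial

/-- A Young tableau of two-row shape `(a, b)` (with `b ≤ a`) filled bijectively with
the letters of `S ⊆ Fin n`.  `top` is the first row, `bot` the second row. -/
structure TwoRowTab (n a b : ℕ) (S : Finset (Fin n)) where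
  hba : b ≤ a
  top : Fin a → Fin n
  bot : Fin b → Fin n
  inj : Function.Injective (Sum.elim top bot)
  range_eq : ∀ s : Fin n, s ∈ S ↔ ∃ x, Sum.elim top bot x = s

/-- The Specht polynomial of a two-row tableau: the product over the two-box columns
`k` of `x_{top k} - x_{bot k}`. -/
noncomputable def spechtPoly (K : Type) [Field K] {n a b : ℕ} {S : Finset (Fin n)}
    (T : TwoRowTab n a b S) : MvPolynomial (Fin n) K :=
  ∏ k : Fin b, (X (T.top (Fin.castLE T.hba k)) - X (T.bot k))

/-- The Specht ideal of the two-row shape `(a, b)` in `K[x_1, …, x_n]`. -/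
noncomputable def spechtIdeal (K : Type) [Field K] (n a b : ℕ) :
    Ideal (MvPolynomial (Fin n) K) :=
  Ideal.span (Set.range (fun T : TwoRowTab n a b Finset.univ => spechtPoly K T))

/-- A Young tableau of three-row shape `(e, e, 1)` filled bijectively with the letters
of `S ⊆ Fin n`; `low` is the unique box of the third row. -/
structure ThreeRowTab (n e : ℕ) (S : Finset (Fin n)) where
  he : 0 < e
  top : Fin e → Fin n
  mid : Fin e → Fin n
  low : Fin n
  inj : Function.Injective (Sum.elim (Sum.elim top mid) (fun _ : Unit => low))
  range_eq : ∀ s : Fin n, s ∈ S ↔ ∃ x, Sum.elim (Sum.elim top mid) (fun _ : Unit => low) x = s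

/-- The Specht polynomial of a tableau of shape `(e, e, 1)`. -/
noncomputable def spechtPoly3 (K : Type) [Field K] {n e : ℕ} {S : Finset (Fin n)}
    (T : ThreeRowTab n e S) : MvPolynomial (Fin n) K :=
  (∏ k : Fin e, (X (T.top k) - X (T.mid k))) *
    ((X (T.top ⟨0, T.he⟩) - X T.low) * (X (T.mid ⟨0, T.he⟩) - X T.low))

/-- The Specht ideal of the shape `(e, e, 1)` in `K[x_1, …, x_n]`. -/
noncomputable def spechtIdeal3 (K : Type) [Field K] (n e : ℕ) :
    Ideal (MvPolynomial (Fin n) K) :=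
  Ideal.span (Set.range (fun T : ThreeRowTab n e Finset.univ => spechtPoly3 K T))

/-- The Hilbert function of `R/I`: the `K`-dimension of the image of the space of
homogeneous polynomials of degree `j` in `R ⧸ I`. -/
noncomputable def hilb (K : Type) [Field K] {n : ℕ} (I : Ideal (MvPolynomial (Fin n) K))
    (j : ℕ) : ℕ :=
  Module.finrank K (Submodule.map (Ideal.Quotient.mkₐ K I).toLinearMap
    (homogeneousSubmodule (Fin n) K j))

/-- The strict lexicographic order on monomial exponents with `x_n ≻ x_{n-1} ≻ ⋯ ≻ x_1`:
`m₁ ≺ m₂` iff at the largest index where they differ, `m₂` has the larger exponent. -/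
def lexLt {n : ℕ} (m₁ m₂ : Fin n →₀ ℕ) : Prop :=
  Finsupp.Lex (fun i j : Fin n => j < i) (· < ·) m₁ m₂

/-- `m` is the initial (leading) monomial exponent of `f` for the lexicographic
order with `x_n ≻ ⋯ ≻ x_1`. -/
def IsInitMonomial {K : Type} [Field K] {n : ℕ} (f : MvPolynomial (Fin n) K)
    (m : Fin n →₀ ℕ) : Prop :=
  m ∈ f.support ∧ ∀ m' ∈ f.support, m' ≠ m → lexLt m' m

/-- The trimmed form of `f`: the sum of the terms of `f` whose monomial is not divisible
by any squarefree monomial of degree `d+1`, i.e. whose support has at most `d` elements. -/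
noncomputable def trm {K : Type} [Field K] {n : ℕ} (d : ℕ) (f : MvPolynomial (Fin n) K) :
    MvPolynomial (Fin n) K :=
  ∑ m ∈ f.support, if m.support.card ≤ d then monomial m (coeff m f) else 0

/-- A two-row tableau is standard if both rows are strictly increasing from left to
right and each two-box column is increasing from top to bottom. -/
def IsStandard2 {n a b : ℕ} {S : Finset (Fin n)} (T : TwoRowTab n a b S) : Prop :=
  StrictMono T.top ∧ StrictMono T.bot ∧ ∀ k : Fin b, T.top (Fin.castLE T.hba k) < T.bot k
namespace Sp
open Finset

variable {n d : ℕ}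

lemma lexLt_iff {m₁ m₂ : Fin n →₀ ℕ} :
    lexLt m₁ m₂ ↔ ∃ i, (∀ j, i < j → m₁ j = m₂ j) ∧ m₁ i < m₂ i := Iff.rfl

lemma lexLt_asymm {m₁ m₂ : Fin n →₀ ℕ} (h : lexLt m₁ m₂) (h' : lexLt m₂ m₁) : False := by
  obtain ⟨i, hi, li⟩ := lexLt_iff.mp h
  obtain ⟨j, hj, lj⟩ := lexLt_iff.mp h'
  rcases lt_trichotomy i j with hij | hij | hij
  · have h2 : m₁ j = m₂ j := hi j hij
    omega
  · subst hij; omega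
  · have h2 : m₂ i = m₁ i := hj i hij
    omega
lemma initMonomial_unique {K : Type} [Field K] {f : MvPolynomial (Fin n) K}
    {m₁ m₂ : Fin n →₀ ℕ} (h₁ : IsInitMonomial f m₁) (h₂ : IsInitMonomial f m₂) : m₁ = m₂ := by
  by_contra hne
  exact lexLt_asymm (h₂.2 m₁ h₁.1 hne) (h₁.2 m₂ h₂.1 (Ne.symm hne))

/-- the squarefree monomial with support `A` -/
noncomputable def monOf (A : Finset (Fin n)) : Fin n →₀ ℕ := ∑ i ∈ A, Finsupp.single i 1

lemma monOf_apply (A : Finset (Fin n)) (j : Fin n) :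
    monOf A j = if j ∈ A then 1 else 0 := by
  rw [monOf, Finsupp.finset_sum_apply]
  simp only [Finsupp.single_apply]
  rw [Finset.sum_ite_eq' A j (fun _ => 1)]

lemma monOf_inj {A B : Finset (Fin n)} (h : monOf A = monOf B) : A = B := by
  ext j
  have := congrArg (fun m : Fin n →₀ ℕ => m j) h
  simp only [monOf_apply] at this
  by_cases hA : j ∈ A <;> by_cases hB : j ∈ B <;> simp [hA, hB] at this ⊢

/-- binary key of a finset -/
def key (A : Finset (Fin n)) : ℕ := ∑ i ∈ A, 2 ^ (i : ℕ)

lemma sum_range_two_pow (i : ℕ) : ∑ k ∈ range i, 2 ^ k = 2 ^ i - 1 := by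
  induction i with
  | zero => simp
  | succ m ih =>
    rw [Finset.sum_range_succ, ih, pow_succ]
    have : 1 ≤ 2 ^ m := Nat.one_le_two_pow
    omega

lemma key_lt_of {A B : Finset (Fin n)} {i : Fin n} (hiB : i ∈ B) (hiA : i ∉ A)
    (hj : ∀ j, i < j → (j ∈ A ↔ j ∈ B)) : key A < key B := by
  classical
  have hsplitA := Finset.sum_filter_add_sum_filter_not A (fun j => i < j) (fun j => 2 ^ (j : ℕ))
  have hsplitB := Finset.sum_filter_add_sum_filter_not B (fun j => i < j) (fun j => 2 ^ (j : ℕ))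
  have hfil : A.filter (fun j => i < j) = B.filter (fun j => i < j) := by
    ext j; simp only [Finset.mem_filter]
    constructor
    · rintro ⟨hj1, hj2⟩; exact ⟨(hj j hj2).1 hj1, hj2⟩
    · rintro ⟨hj1, hj2⟩; exact ⟨(hj j hj2).2 hj1, hj2⟩
  -- low part of A is < 2^i
  have hlowA : ∑ j ∈ A.filter (fun j => ¬ i < j), 2 ^ (j : ℕ) ≤ 2 ^ (i : ℕ) - 1 := by
    have hsub : (A.filter (fun j => ¬ i < j)).image (fun j : Fin n => (j : ℕ)) ⊆
        Finset.range (i : ℕ) := by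
      intro x hx
      simp only [Finset.mem_image, Finset.mem_filter] at hx
      obtain ⟨j, ⟨hjA, hjle⟩, rfl⟩ := hx
      have : j ≠ i := fun h => hiA (h ▸ hjA)
      have : j < i := lt_of_le_of_ne (not_lt.mp hjle) this
      simpa [Finset.mem_range] using this
    calc ∑ j ∈ A.filter (fun j => ¬ i < j), 2 ^ (j : ℕ)
        = ∑ x ∈ (A.filter (fun j => ¬ i < j)).image (fun j : Fin n => (j : ℕ)), 2 ^ x := by
          rw [Finset.sum_image (by intro x _ y _ h; exact Fin.val_injective h)]
      _ ≤ ∑ x ∈ Finset.range (i : ℕ), 2 ^ x := Finset.sum_le_sum_of_subset hsub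
      _ = 2 ^ (i : ℕ) - 1 := sum_range_two_pow _
  have hmem : i ∈ B.filter (fun j => ¬ i < j) := by
    simp only [Finset.mem_filter]
    exact ⟨hiB, by omega⟩
  have hlowB : 2 ^ (i : ℕ) ≤ ∑ j ∈ B.filter (fun j => ¬ i < j), 2 ^ (j : ℕ) :=
    Finset.single_le_sum (f := fun j : Fin n => 2 ^ (j : ℕ)) (fun _ _ => Nat.zero_le _) hmem
  have hpos : 1 ≤ 2 ^ (i : ℕ) := Nat.one_le_two_pow
  rw [key, key, ← Finset.sum_filter_add_sum_filter_not A (fun j => i < j) (fun j => 2 ^ (j : ℕ)),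
    ← Finset.sum_filter_add_sum_filter_not B (fun j => i < j) (fun j => 2 ^ (j : ℕ)), hfil]
  omega

lemma exists_top_diff {A B : Finset (Fin n)} (h : A ≠ B) :
    ∃ i, ((i ∈ A ∧ i ∉ B) ∨ (i ∈ B ∧ i ∉ A)) ∧ ∀ j, i < j → (j ∈ A ↔ j ∈ B) := by
  classical
  set D := (A \ B) ∪ (B \ A) with hD
  have hne : D.Nonempty := by
    by_contra hempty
    apply h
    ext x
    have hx : x ∉ D := fun hx => hempty ⟨x, hx⟩
    simp only [hD, Finset.mem_union, Finset.mem_sdiff, not_or, not_and, not_not] at hx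
    constructor
    · intro hxa; by_contra hxb; exact hxb (hx.1 hxa)
    · intro hxb; by_contra hxa; exact hxa (hx.2 hxb)
  refine ⟨D.max' hne, ?_, ?_⟩
  · have := D.max'_mem hne
    simp only [hD, Finset.mem_union, Finset.mem_sdiff] at this
    tauto
  · intro j hj
    have hjD : j ∉ D := fun hjD => absurd (D.le_max' j hjD) (not_le.mpr hj)
    simp only [hD, Finset.mem_union, Finset.mem_sdiff, not_or, not_and, not_not] at hjD
    constructor
    · intro hxa; by_contra hxb; exact hxb (hjD.1 hxa)
    · intro hxb; by_contra hxa; exact hxa (hjD.2 hxb)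

lemma key_ne {A B : Finset (Fin n)} (h : A ≠ B) : key A ≠ key B := by
  obtain ⟨i, hcase, hj⟩ := exists_top_diff h
  rcases hcase with ⟨hA, hB⟩ | ⟨hB, hA⟩
  · exact (key_lt_of hA hB (fun j hij => (hj j hij).symm)).ne'
  · exact (key_lt_of hB hA hj).ne

lemma keyLt_to_lex {A B : Finset (Fin n)} (h : A ≠ B) (hk : key A < key B) :
    lexLt (monOf A) (monOf B) := by
  obtain ⟨i, hcase, hj⟩ := exists_top_diff h
  rcases hcase with ⟨hA, hB⟩ | ⟨hB, hA⟩
  · exact absurd (key_lt_of hA hB (fun j hij => (hj j hij).symm)) (by omega)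
  · refine ⟨i, ?_, ?_⟩
    · intro j hij
      rw [monOf_apply, monOf_apply]
      by_cases hjA : j ∈ A
      · rw [if_pos hjA, if_pos ((hj j hij).1 hjA)]
      · rw [if_neg hjA, if_neg (fun hjB => hjA ((hj j hij).2 hjB))]
    · rw [monOf_apply, monOf_apply, if_pos hB, if_neg hA]; omega

lemma lex_to_keyLt {A B : Finset (Fin n)} (h : lexLt (monOf A) (monOf B)) :
    key A < key B := by
  obtain ⟨i, hi, li⟩ := lexLt_iff.mp h
  rw [monOf_apply, monOf_apply] at li
  by_cases hA : i ∈ A <;> by_cases hB : i ∈ B <;> simp [hA, hB] at li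
  refine key_lt_of hB hA (fun j hij => ?_)
  have h2 : monOf A j = monOf B j := hi j hij
  rw [monOf_apply, monOf_apply] at h2
  by_cases hjA : j ∈ A <;> by_cases hjB : j ∈ B <;> simp_all

/-- a partial matching: `d` disjoint ordered pairs of letters in `Fin n` -/
structure Mch (n d : ℕ) where
  pr : Fin d → Fin n × Fin n
  lt : ∀ k, (pr k).1 < (pr k).2
  disj : ∀ k l, k ≠ l → ∀ x, (x = (pr k).1 ∨ x = (pr k).2) → x ≠ (pr l).1 ∧ x ≠ (pr l).2

namespace Mch

variable (M : Mch n d)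

lemma min_ne_max (k l : Fin d) : (M.pr k).1 ≠ (M.pr l).2 := by
  by_cases h : k = l
  · subst h; exact (M.lt k).ne
  · exact (M.disj k l h _ (Or.inl rfl)).2

lemma maxInj : Function.Injective (fun k => (M.pr k).2) := by
  intro k l h
  by_contra hne
  exact (M.disj k l hne _ (Or.inr rfl)).2 h

lemma minInj : Function.Injective (fun k => (M.pr k).1) := by
  intro k l h
  by_contra hne
  exact (M.disj k l hne _ (Or.inl rfl)).1 h

def maxSet : Finset (Fin n) := Finset.image (fun k => (M.pr k).2) Finset.univ
def minSet : Finset (Fin n) := Finset.image (fun k => (M.pr k).1) Finset.univ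

lemma card_maxSet : (M.maxSet).card = d := by
  rw [maxSet, Finset.card_image_of_injective _ M.maxInj, Finset.card_univ, Fintype.card_fin]

lemma card_minSet : (M.minSet).card = d := by
  rw [minSet, Finset.card_image_of_injective _ M.minInj, Finset.card_univ, Fintype.card_fin]

lemma minSet_disj_maxSet : ∀ x ∈ M.minSet, x ∉ M.maxSet := by
  intro x hx hx2
  rw [minSet, Finset.mem_image] at hx
  rw [maxSet, Finset.mem_image] at hx2
  obtain ⟨k, _, rfl⟩ := hx
  obtain ⟨l, _, h⟩ := hx2
  exact M.min_ne_max k l h.symm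

/-- injectivity of transversals -/
lemma transInj {c : Fin d → Fin n} (hc : ∀ k, c k = (M.pr k).1 ∨ c k = (M.pr k).2) :
    Function.Injective c := by
  intro k l h
  by_contra hne
  have h2 := M.disj k l hne (c k) (hc k)
  rcases hc l with h3 | h3
  · exact h2.1 (h.trans h3)
  · exact h2.2 (h.trans h3)

end Mch

variable (K : Type) [Field K]

/-- the product of column differences of a matching -/
noncomputable def mpoly (M : Mch n d) : MvPolynomial (Fin n) K :=
  ∏ k, (X ((M.pr k).1) - X ((M.pr k).2))

noncomputable def topMon (M : Mch n d) : Fin n →₀ ℕ := monOf M.maxSet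

lemma support_prod_pairs (M : Mch n d) (s : Finset (Fin d)) :
    ∀ m ∈ (∏ k ∈ s, (X ((M.pr k).1) - X ((M.pr k).2)) : MvPolynomial (Fin n) K).support,
      ∃ c : Fin d → Fin n, (∀ k, c k = (M.pr k).1 ∨ c k = (M.pr k).2) ∧
        m = ∑ k ∈ s, Finsupp.single (c k) 1 := by
  classical
  induction s using Finset.induction_on with
  | empty =>
    intro m hm
    rw [Finset.prod_empty] at hm
    have : m = 0 := by
      rw [MvPolynomial.mem_support_iff, MvPolynomial.coeff_one] at hm
      by_contra h0
      rw [if_neg (fun h => h0 h.symm)] at hm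
      exact hm rfl
    exact ⟨fun k => (M.pr k).1, fun k => Or.inl rfl, by simp [this]⟩
  | @insert a s' ha ih =>
    intro m hm
    rw [Finset.prod_insert ha] at hm
    have hsub := MvPolynomial.support_mul (X ((M.pr a).1) - X ((M.pr a).2))
      (∏ k ∈ s', (X ((M.pr k).1) - X ((M.pr k).2)) : MvPolynomial (Fin n) K) hm
    rw [Finset.mem_add] at hsub
    obtain ⟨m₁, hm₁, m₂, hm₂, rfl⟩ := hsub
    have hm₁' : m₁ = Finsupp.single ((M.pr a).1) 1 ∨ m₁ = Finsupp.single ((M.pr a).2) 1 := by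
      have h1 := MvPolynomial.support_sub (Fin n) (X ((M.pr a).1) : MvPolynomial (Fin n) K)
        (X ((M.pr a).2)) hm₁
      rw [Finset.mem_union, MvPolynomial.support_X, MvPolynomial.support_X] at h1
      simpa using h1
    obtain ⟨c, hc, rfl⟩ := ih m₂ hm₂
    rcases hm₁' with h | h
    · refine ⟨Function.update c a ((M.pr a).1), ?_, ?_⟩
      · intro k
        by_cases hk : k = a
        · subst hk; simp [Function.update_self]
        · simp [Function.update_of_ne hk, hc k]
      · rw [Finset.sum_insert ha, Function.update_self, ← h]
        congr 1
        exact Finset.sum_congr rfl fun k hk =>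
          by rw [Function.update_of_ne (fun hka => ha (by rw [← hka]; exact hk))]
    · refine ⟨Function.update c a ((M.pr a).2), ?_, ?_⟩
      · intro k
        by_cases hk : k = a
        · subst hk; simp [Function.update_self]
        · simp [Function.update_of_ne hk, hc k]
      · rw [Finset.sum_insert ha, Function.update_self, ← h]
        congr 1
        exact Finset.sum_congr rfl fun k hk =>
          by rw [Function.update_of_ne (fun hka => ha (by rw [← hka]; exact hk))]

lemma coeff_top_prod_pairs (M : Mch n d) (s : Finset (Fin d)) :
    MvPolynomial.coeff (∑ k ∈ s, Finsupp.single ((M.pr k).2) 1)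
      (∏ k ∈ s, (X ((M.pr k).1) - X ((M.pr k).2)) : MvPolynomial (Fin n) K)
      = (-1) ^ s.card := by
  classical
  induction s using Finset.induction_on with
  | empty => simp
  | @insert a s' ha ih =>
    rw [Finset.prod_insert ha, Finset.sum_insert ha]
    set q : MvPolynomial (Fin n) K := ∏ k ∈ s', (X ((M.pr k).1) - X ((M.pr k).2))
    set rest : Fin n →₀ ℕ := ∑ k ∈ s', Finsupp.single ((M.pr k).2) 1 with hrest
    have hrw : (X ((M.pr a).1) - X ((M.pr a).2)) * q
        = q * X ((M.pr a).1) - q * X ((M.pr a).2) := by ring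
    rw [hrw, MvPolynomial.coeff_sub, MvPolynomial.coeff_mul_X', MvPolynomial.coeff_mul_X']
    have happ : ∀ j : Fin n, ((Finsupp.single ((M.pr a).2) 1 + rest : Fin n →₀ ℕ)) j
        = (if (M.pr a).2 = j then 1 else 0) + ∑ k ∈ s', (if (M.pr k).2 = j then 1 else 0) := by
      intro j
      rw [Finsupp.add_apply, hrest, Finsupp.finset_sum_apply, Finsupp.single_apply]
      congr 1
      exact Finset.sum_congr rfl fun k _ => Finsupp.single_apply
    have hnotmin : (M.pr a).1 ∉ (Finsupp.single ((M.pr a).2) 1 + rest).support := by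
      rw [Finsupp.notMem_support_iff, happ]
      rw [if_neg (fun h => M.min_ne_max a a h.symm)]
      rw [Finset.sum_eq_zero fun k _ => if_neg (fun h => M.min_ne_max a k h.symm)]
      rfl
    have hmax : (M.pr a).2 ∈ (Finsupp.single ((M.pr a).2) 1 + rest).support := by
      rw [Finsupp.mem_support_iff, happ, if_pos rfl]
      rw [Finset.sum_eq_zero fun k hk => if_neg (fun h => ha (by rw [← M.maxInj h]; exact hk))]
      omega
    rw [if_neg hnotmin, if_pos hmax, add_tsub_cancel_left, ih]
    rw [Finset.card_insert_of_notMem ha]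
    ring

lemma topMon_eq_sum (M : Mch n d) :
    topMon M = ∑ k, Finsupp.single ((M.pr k).2) 1 := by
  rw [topMon, monOf, Mch.maxSet,
    Finset.sum_image (fun x _ y _ h => M.maxInj h)]

lemma key_maxSet (M : Mch n d) : key M.maxSet = ∑ k, 2 ^ (((M.pr k).2 : Fin n) : ℕ) := by
  rw [key, Mch.maxSet, Finset.sum_image (fun x _ y _ h => M.maxInj h)]

lemma coeff_topMon (M : Mch n d) :
    MvPolynomial.coeff (topMon M) (mpoly K M) = (-1) ^ d := by
  rw [topMon_eq_sum, mpoly, coeff_top_prod_pairs, Finset.card_univ, Fintype.card_fin]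

/-- every monomial in the support of a matching polynomial is squarefree with
key at most that of the max set, strictly if it is not the top monomial -/
lemma supp_mpoly_bound (M : Mch n d) {m : Fin n →₀ ℕ} (hm : m ∈ (mpoly K M).support) :
    ∃ A : Finset (Fin n), m = monOf A ∧ key A ≤ key M.maxSet ∧
      (m ≠ topMon M → key A < key M.maxSet) := by
  obtain ⟨c, hc, rfl⟩ := support_prod_pairs K M Finset.univ m hm
  have hcinj : Function.Injective c := M.transInj hc
  refine ⟨Finset.image c Finset.univ, ?_, ?_, ?_⟩
  · rw [monOf, Finset.sum_image (fun x _ y _ h => hcinj h)]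
  · rw [key, Finset.sum_image (fun x _ y _ h => hcinj h), key_maxSet]
    refine Finset.sum_le_sum fun k _ => ?_
    rcases hc k with h | h <;> rw [h]
    exact Nat.pow_le_pow_right (by norm_num) (le_of_lt (M.lt k))
  · intro hne
    have hex : ∃ k, c k ≠ (M.pr k).2 := by
      by_contra hall
      push_neg at hall
      exact hne (by rw [topMon_eq_sum]; exact Finset.sum_congr rfl fun k _ => by rw [hall])
    obtain ⟨k₀, hk₀⟩ := hex
    rw [key, Finset.sum_image (fun x _ y _ h => hcinj h), key_maxSet]
    refine Finset.sum_lt_sum (fun k _ => ?_) ⟨k₀, Finset.mem_univ _, ?_⟩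
    · rcases hc k with h | h <;> rw [h]
      exact Nat.pow_le_pow_right (by norm_num) (le_of_lt (M.lt k))
    · have : c k₀ = (M.pr k₀).1 := (hc k₀).resolve_right hk₀
      rw [this]
      exact Nat.pow_lt_pow_right (by norm_num) (M.lt k₀)

lemma isInit_mpoly (M : Mch n d) : IsInitMonomial (mpoly K M) (topMon M) := by
  constructor
  · rw [MvPolynomial.mem_support_iff, coeff_topMon]
    exact pow_ne_zero _ (neg_ne_zero.mpr one_ne_zero)
  · intro m' hm' hne
    obtain ⟨A, rfl, hle, hlt⟩ := supp_mpoly_bound K M hm'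
    have hAne : A ≠ M.maxSet := fun h => hne (by rw [topMon, h])
    exact keyLt_to_lex hAne (hlt (fun h => hne h))

/-! ### rewriting machinery -/

def pairMem (M : Mch n d) (a : Fin d) (x : Fin n) : Prop :=
  x = (M.pr a).1 ∨ x = (M.pr a).2

lemma Mch.ne_of_pairMem {M : Mch n d} {a b : Fin d} {x y : Fin n} (hab : a ≠ b)
    (hx : pairMem M a x) (hy : pairMem M b y) : x ≠ y := by
  have h := M.disj a b hab x hx
  rcases hy with h1 | h1
  · rw [h1]; exact h.1
  · rw [h1]; exact h.2

def Mch.upd1 (M : Mch n d) (k : Fin d) (p : Fin n × Fin n) (h1 : p.1 < p.2)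
    (hfr : ∀ l, l ≠ k → ∀ x, pairMem M l x → p.1 ≠ x ∧ p.2 ≠ x) : Mch n d where
  pr := Function.update M.pr k p
  lt := by
    intro j
    by_cases h : j = k
    · subst h; rw [Function.update_self]; exact h1
    · rw [Function.update_of_ne h]; exact M.lt j
  disj := by
    intro a b hab x hx
    by_cases ha : a = k <;> by_cases hb : b = k
    · exact absurd (ha.trans hb.symm) hab
    · subst ha
      rw [Function.update_self] at hx
      rw [Function.update_of_ne hb]
      constructor
      · rcases hx with h | h <;> rw [h]
        · exact (hfr b hb _ (Or.inl rfl)).1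
        · exact (hfr b hb _ (Or.inl rfl)).2
      · rcases hx with h | h <;> rw [h]
        · exact (hfr b hb _ (Or.inr rfl)).1
        · exact (hfr b hb _ (Or.inr rfl)).2
    · subst hb
      rw [Function.update_of_ne ha] at hx
      rw [Function.update_self]
      have h := hfr a ha x hx
      exact ⟨fun hh => h.1 hh.symm, fun hh => h.2 hh.symm⟩
    · rw [Function.update_of_ne ha] at hx
      rw [Function.update_of_ne hb]
      exact M.disj a b hab x hx

def Mch.upd2 (M : Mch n d) (k l : Fin d) (hkl : k ≠ l) (p q : Fin n × Fin n)
    (hp : p.1 < p.2) (hq : q.1 < q.2)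
    (hpq : p.1 ≠ q.1 ∧ p.1 ≠ q.2 ∧ p.2 ≠ q.1 ∧ p.2 ≠ q.2)
    (holdp : ∀ x, x = p.1 ∨ x = p.2 → pairMem M k x ∨ pairMem M l x)
    (holdq : ∀ x, x = q.1 ∨ x = q.2 → pairMem M k x ∨ pairMem M l x) : Mch n d where
  pr := Function.update (Function.update M.pr k p) l q
  lt := by
    intro j
    by_cases hj : j = l
    · subst hj; rw [Function.update_self]; exact hq
    · rw [Function.update_of_ne hj]
      by_cases hj2 : j = k
      · subst hj2; rw [Function.update_self]; exact hp
      · rw [Function.update_of_ne hj2]; exact M.lt j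
  disj := by
    have getpr : ∀ j : Fin d, (Function.update (Function.update M.pr k p) l q) j
        = if j = l then q else if j = k then p else M.pr j := by
      intro j
      by_cases hj : j = l
      · subst hj; rw [Function.update_self, if_pos rfl]
      · rw [Function.update_of_ne hj, if_neg hj]
        by_cases hj2 : j = k
        · subst hj2; rw [Function.update_self, if_pos rfl]
        · rw [Function.update_of_ne hj2, if_neg hj2]
    have step : ∀ b : Fin d, b ≠ k → b ≠ l → ∀ x, (pairMem M k x ∨ pairMem M l x) →
        x ≠ (M.pr b).1 ∧ x ≠ (M.pr b).2 := by
      intro b hbk hbl x hy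
      rcases hy with hy | hy
      · exact ⟨Mch.ne_of_pairMem (Ne.symm hbk) hy (Or.inl rfl),
          Mch.ne_of_pairMem (Ne.symm hbk) hy (Or.inr rfl)⟩
      · exact ⟨Mch.ne_of_pairMem (Ne.symm hbl) hy (Or.inl rfl),
          Mch.ne_of_pairMem (Ne.symm hbl) hy (Or.inr rfl)⟩
    have step2 : ∀ a : Fin d, a ≠ k → a ≠ l → ∀ x (r : Fin n × Fin n), pairMem M a x →
        (∀ y, y = r.1 ∨ y = r.2 → pairMem M k y ∨ pairMem M l y) →
        x ≠ r.1 ∧ x ≠ r.2 := by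
      intro a hak hal x r hx hold
      constructor
      · rcases hold r.1 (Or.inl rfl) with hy | hy
        · exact Mch.ne_of_pairMem hak hx hy
        · exact Mch.ne_of_pairMem hal hx hy
      · rcases hold r.2 (Or.inr rfl) with hy | hy
        · exact Mch.ne_of_pairMem hak hx hy
        · exact Mch.ne_of_pairMem hal hx hy
    intro a b hab x hx
    rw [getpr] at hx
    rw [getpr]
    by_cases hal : a = l
    · rw [if_pos hal] at hx
      by_cases hbk : b = k
      · rw [if_neg (fun h : b = l => hkl (hbk.symm.trans h)), if_pos hbk]
        rcases hx with h | h <;> rw [h]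
        · exact ⟨Ne.symm hpq.1, Ne.symm hpq.2.2.1⟩
        · exact ⟨Ne.symm hpq.2.1, Ne.symm hpq.2.2.2⟩
      · have hbl : b ≠ l := fun h : b = l => hab (hal.trans h.symm)
        rw [if_neg hbl, if_neg hbk]
        exact step b hbk hbl x (holdq x hx)
    · by_cases hak : a = k
      · rw [if_neg hal, if_pos hak] at hx
        by_cases hbl : b = l
        · rw [if_pos hbl]
          rcases hx with h | h <;> rw [h]
          · exact ⟨hpq.1, hpq.2.1⟩
          · exact ⟨hpq.2.2.1, hpq.2.2.2⟩
        · by_cases hbk : b = k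
          · exact absurd (hak.trans hbk.symm) hab
          · rw [if_neg hbl, if_neg hbk]
            exact step b hbk hbl x (holdp x hx)
      · rw [if_neg hal, if_neg hak] at hx
        by_cases hbl : b = l
        · rw [if_pos hbl]
          exact step2 a hak hal x q hx holdq
        · by_cases hbk : b = k
          · rw [if_neg hbl, if_pos hbk]
            exact step2 a hak hal x p hx holdp
          · rw [if_neg hbl, if_neg hbk]
            exact M.disj a b hab x hx

/-! ### the measure -/

def C2 (n : ℕ) : ℕ := n * n + 1
def C1 (n : ℕ) : ℕ := 4 ^ n * C2 n + n * n + 1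

def phiP (n : ℕ) (p : Fin n × Fin n) : ℕ :=
  16 ^ ((p.2 : ℕ)) * C1 n + 4 ^ ((p.1 : ℕ)) * C2 n + (n * n - (p.1 : ℕ) * (p.2 : ℕ))

def Phi (M : Mch n d) : ℕ := ∑ k, phiP n (M.pr k)

lemma phiP_lb (p : Fin n × Fin n) : 16 ^ ((p.2 : ℕ)) * C1 n ≤ phiP n p :=
  (Nat.le_add_right _ _).trans (Nat.le_add_right _ _)

lemma phiP_ub (p : Fin n × Fin n) : phiP n p < 16 ^ ((p.2 : ℕ)) * C1 n + C1 n := by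
  have h1 : (4 : ℕ) ^ ((p.1 : ℕ)) < 4 ^ n := Nat.pow_lt_pow_right (by norm_num) p.1.isLt
  have h2 : n * n - (p.1 : ℕ) * (p.2 : ℕ) ≤ n * n := Nat.sub_le _ _
  have h3 : 4 ^ ((p.1 : ℕ)) * C2 n + 4 ^ ((p.1 : ℕ)) * 0 + C2 n ≤ 4 ^ n * C2 n :=
    by
      have := Nat.mul_le_mul_right (C2 n) (Nat.succ_le_of_lt h1)
      calc 4 ^ ((p.1 : ℕ)) * C2 n + 4 ^ ((p.1 : ℕ)) * 0 + C2 n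
          = (4 ^ ((p.1 : ℕ)) + 1) * C2 n := by ring
        _ ≤ 4 ^ n * C2 n := this
  rw [phiP, C1]
  have h4 : n * n < C2 n := by rw [C2]; omega
  omega

lemma pow16_succ_le {a b : ℕ} (h : a < b) : 16 ^ a + 1 ≤ 16 ^ b := by
  have h1 : (16 : ℕ) ^ a * 16 ≤ 16 ^ b := by
    rw [← pow_succ]
    exact Nat.pow_le_pow_right (by norm_num) h
  have h2 : 1 ≤ (16 : ℕ) ^ a := Nat.one_le_two_pow.trans (Nat.pow_le_pow_left (by norm_num) a)
  omega

lemma pow16_two_le {a b : ℕ} (h : a < b) : 16 ^ a + 2 ≤ 16 ^ b := by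
  have h1 : (16 : ℕ) ^ a * 16 ≤ 16 ^ b := by
    rw [← pow_succ]
    exact Nat.pow_le_pow_right (by norm_num) h
  have h2 : 1 ≤ (16 : ℕ) ^ a := Nat.one_le_two_pow.trans (Nat.pow_le_pow_left (by norm_num) a)
  omega

/-- primary decrease: smaller max gives smaller weight -/
lemma phiP_lt_primary {p q : Fin n × Fin n} (h : (q.2 : ℕ) < (p.2 : ℕ)) :
    phiP n q < phiP n p := by
  have h1 := phiP_ub (n := n) q
  have h2 := phiP_lb (n := n) p
  have h3 : (16 ^ ((q.2 : ℕ)) + 1) * C1 n ≤ 16 ^ ((p.2 : ℕ)) * C1 n :=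
    Nat.mul_le_mul_right _ (pow16_succ_le h)
  nlinarith

/-- secondary decrease: same max, smaller min -/
lemma phiP_lt_min {p q : Fin n × Fin n} (hmax : (q.2 : ℕ) = (p.2 : ℕ))
    (hmin : (q.1 : ℕ) < (p.1 : ℕ)) : phiP n q < phiP n p := by
  have h4 : (4 : ℕ) ^ ((q.1 : ℕ)) + 1 ≤ 4 ^ ((p.1 : ℕ)) := by
    have h1 : (4 : ℕ) ^ ((q.1 : ℕ)) * 4 ≤ 4 ^ ((p.1 : ℕ)) := by
      rw [← pow_succ]
      exact Nat.pow_le_pow_right (by norm_num) hmin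
    have h2 : 1 ≤ (4 : ℕ) ^ ((q.1 : ℕ)) := Nat.one_le_two_pow.trans
      (Nat.pow_le_pow_left (by norm_num) _)
    omega
  have h5 : (4 ^ ((q.1 : ℕ)) + 1) * C2 n ≤ 4 ^ ((p.1 : ℕ)) * C2 n :=
    Nat.mul_le_mul_right _ h4
  have h6 : n * n - (q.1 : ℕ) * (p.2 : ℕ) ≤ n * n := Nat.sub_le _ _
  have h7 : n * n < C2 n := by rw [C2]; omega
  rw [Nat.add_mul, one_mul] at h5
  rw [phiP, phiP, hmax]
  linarith [Nat.zero_le (n * n - (p.1 : ℕ) * (p.2 : ℕ))]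

/-- the crossing swap: tertiary decrease -/
lemma phiP_swap {w x y z : Fin n} (hwx : w < x) (hxy : x < y) (hyz : y < z) :
    phiP n (w, y) + phiP n (x, z) < phiP n (w, z) + phiP n (x, y) := by
  have hkey : (w : ℕ) * (z : ℕ) + (x : ℕ) * (y : ℕ) < (w : ℕ) * (y : ℕ) + (x : ℕ) * (z : ℕ) := by
    zify
    nlinarith [mul_pos (show (0:ℤ) < (x:ℕ) - (w:ℕ) by
        have : (w:ℕ) < (x:ℕ) := hwx
        omega)
      (show (0:ℤ) < (z:ℕ) - (y:ℕ) by
        have : (y:ℕ) < (z:ℕ) := hyz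
        omega)]
  have b1 : (w : ℕ) * (y : ℕ) ≤ n * n :=
    Nat.mul_le_mul (le_of_lt w.isLt) (le_of_lt y.isLt)
  have b2 : (x : ℕ) * (z : ℕ) ≤ n * n :=
    Nat.mul_le_mul (le_of_lt x.isLt) (le_of_lt z.isLt)
  have b3 : (w : ℕ) * (z : ℕ) ≤ n * n :=
    Nat.mul_le_mul (le_of_lt w.isLt) (le_of_lt z.isLt)
  have b4 : (x : ℕ) * (y : ℕ) ≤ n * n :=
    Nat.mul_le_mul (le_of_lt x.isLt) (le_of_lt y.isLt)
  have htert : (n * n - (w : ℕ) * (y : ℕ)) + (n * n - (x : ℕ) * (z : ℕ))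
      < (n * n - (w : ℕ) * (z : ℕ)) + (n * n - (x : ℕ) * (y : ℕ)) := by omega
  simp only [phiP]
  push_cast
  linarith

/-- the uncrossing to two small pairs -/
lemma phiP_uncross {w x y z : Fin n} (hwx : w < x) (hxy : x < y) (hyz : y < z) :
    phiP n (w, x) + phiP n (y, z) < phiP n (w, z) + phiP n (x, y) := by
  have h1 := phiP_ub (n := n) (w, x)
  have h2 := phiP_ub (n := n) (y, z)
  have h3 := phiP_lb (n := n) (x, y)
  have h4 := phiP_lb (n := n) (w, z)
  have h5 : ((16 : ℕ) ^ ((x : ℕ)) + 2) * C1 n ≤ 16 ^ ((y : ℕ)) * C1 n :=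
    Nat.mul_le_mul_right _ (pow16_two_le hxy)
  simp only at h1 h2 h3 h4
  nlinarith

lemma Phi_decomp (M : Mch n d) (k : Fin d) :
    Phi M = phiP n (M.pr k) + ∑ j ∈ Finset.univ.erase k, phiP n (M.pr j) :=
  (Finset.add_sum_erase _ _ (Finset.mem_univ k)).symm

lemma Phi_decomp2 (M : Mch n d) (k l : Fin d) (hkl : k ≠ l) :
    Phi M = phiP n (M.pr k) + phiP n (M.pr l)
      + ∑ j ∈ (Finset.univ.erase k).erase l, phiP n (M.pr j) := by
  rw [Phi_decomp M k, ← Finset.add_sum_erase _ _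
    (Finset.mem_erase.mpr ⟨Ne.symm hkl, Finset.mem_univ l⟩)]
  ring

/-! ### rewriting a non-standard matching -/

def Std (M : Mch n d) : Prop :=
  (∀ k l, (M.pr k).1 < (M.pr l).1 → (M.pr k).2 < (M.pr l).2) ∧
  (∀ k x, x < (M.pr k).1 → x ∈ M.maxSet ∪ M.minSet)

lemma mpoly_decomp (M : Mch n d) (k : Fin d) :
    mpoly K M = (X ((M.pr k).1) - X ((M.pr k).2))
      * ∏ j ∈ Finset.univ.erase k, (X ((M.pr j).1) - X ((M.pr j).2)) :=
  (Finset.mul_prod_erase _ _ (Finset.mem_univ k)).symm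

lemma mpoly_decomp2 (M : Mch n d) (k l : Fin d) (hkl : k ≠ l) :
    mpoly K M = (X ((M.pr k).1) - X ((M.pr k).2)) * ((X ((M.pr l).1) - X ((M.pr l).2))
      * ∏ j ∈ (Finset.univ.erase k).erase l, (X ((M.pr j).1) - X ((M.pr j).2))) := by
  rw [mpoly_decomp K M k, ← Finset.mul_prod_erase _ _
    (Finset.mem_erase.mpr ⟨Ne.symm hkl, Finset.mem_univ l⟩)]

lemma upd1_pr (M : Mch n d) (k : Fin d) (p : Fin n × Fin n) (h1 : p.1 < p.2)
    (hfr : ∀ l, l ≠ k → ∀ x, pairMem M l x → p.1 ≠ x ∧ p.2 ≠ x) :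
    ∀ j, (M.upd1 k p h1 hfr).pr j = if j = k then p else M.pr j := by
  intro j
  show (Function.update M.pr k p) j = _
  by_cases hj : j = k
  · subst hj; rw [Function.update_self, if_pos rfl]
  · rw [Function.update_of_ne hj, if_neg hj]

lemma mpoly_upd1 (M : Mch n d) (k : Fin d) (p : Fin n × Fin n) (h1 : p.1 < p.2)
    (hfr : ∀ l, l ≠ k → ∀ x, pairMem M l x → p.1 ≠ x ∧ p.2 ≠ x) :
    mpoly K (M.upd1 k p h1 hfr) = (X p.1 - X p.2)
      * ∏ j ∈ Finset.univ.erase k, (X ((M.pr j).1) - X ((M.pr j).2)) := by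
  have hpr := upd1_pr M k p h1 hfr
  rw [mpoly_decomp K _ k, hpr k, if_pos rfl]
  congr 1
  refine Finset.prod_congr rfl fun j hj => ?_
  rw [hpr j, if_neg (Finset.mem_erase.mp hj).1]

lemma phi_upd1 (M : Mch n d) (k : Fin d) (p : Fin n × Fin n) (h1 : p.1 < p.2)
    (hfr : ∀ l, l ≠ k → ∀ x, pairMem M l x → p.1 ≠ x ∧ p.2 ≠ x)
    (hphi : phiP n p < phiP n (M.pr k)) :
    Phi (M.upd1 k p h1 hfr) < Phi M := by
  have hpr := upd1_pr M k p h1 hfr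
  rw [Phi_decomp _ k, Phi_decomp M k, hpr k, if_pos rfl]
  have hrest : ∑ j ∈ Finset.univ.erase k, phiP n ((M.upd1 k p h1 hfr).pr j)
      = ∑ j ∈ Finset.univ.erase k, phiP n (M.pr j) :=
    Finset.sum_congr rfl fun j hj => by
      rw [hpr j, if_neg (Finset.mem_erase.mp hj).1]
  rw [hrest]
  omega

lemma upd2_pr (M : Mch n d) (k l : Fin d) (hkl : k ≠ l) (p q : Fin n × Fin n)
    (hp : p.1 < p.2) (hq : q.1 < q.2)
    (hpq : p.1 ≠ q.1 ∧ p.1 ≠ q.2 ∧ p.2 ≠ q.1 ∧ p.2 ≠ q.2)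
    (holdp : ∀ x, x = p.1 ∨ x = p.2 → pairMem M k x ∨ pairMem M l x)
    (holdq : ∀ x, x = q.1 ∨ x = q.2 → pairMem M k x ∨ pairMem M l x) :
    ∀ j, (M.upd2 k l hkl p q hp hq hpq holdp holdq).pr j
      = if j = l then q else if j = k then p else M.pr j := by
  intro j
  show (Function.update (Function.update M.pr k p) l q) j = _
  by_cases hj : j = l
  · subst hj; rw [Function.update_self, if_pos rfl]
  · rw [Function.update_of_ne hj, if_neg hj]
    by_cases hj2 : j = k
    · subst hj2; rw [Function.update_self, if_pos rfl]
    · rw [Function.update_of_ne hj2, if_neg hj2]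

lemma mpoly_upd2 (M : Mch n d) (k l : Fin d) (hkl : k ≠ l) (p q : Fin n × Fin n)
    (hp : p.1 < p.2) (hq : q.1 < q.2)
    (hpq : p.1 ≠ q.1 ∧ p.1 ≠ q.2 ∧ p.2 ≠ q.1 ∧ p.2 ≠ q.2)
    (holdp : ∀ x, x = p.1 ∨ x = p.2 → pairMem M k x ∨ pairMem M l x)
    (holdq : ∀ x, x = q.1 ∨ x = q.2 → pairMem M k x ∨ pairMem M l x) :
    mpoly K (M.upd2 k l hkl p q hp hq hpq holdp holdq) = (X p.1 - X p.2) * ((X q.1 - X q.2)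
      * ∏ j ∈ (Finset.univ.erase k).erase l, (X ((M.pr j).1) - X ((M.pr j).2))) := by
  have hpr := upd2_pr M k l hkl p q hp hq hpq holdp holdq
  rw [mpoly_decomp2 K _ k l hkl, hpr k, hpr l, if_pos rfl, if_neg hkl, if_pos rfl]
  congr 2
  refine Finset.prod_congr rfl fun j hj => ?_
  have hjl := (Finset.mem_erase.mp hj).1
  have hjk := (Finset.mem_erase.mp (Finset.mem_erase.mp hj).2).1
  rw [hpr j, if_neg hjl, if_neg hjk]

lemma phi_upd2 (M : Mch n d) (k l : Fin d) (hkl : k ≠ l) (p q : Fin n × Fin n)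
    (hp : p.1 < p.2) (hq : q.1 < q.2)
    (hpq : p.1 ≠ q.1 ∧ p.1 ≠ q.2 ∧ p.2 ≠ q.1 ∧ p.2 ≠ q.2)
    (holdp : ∀ x, x = p.1 ∨ x = p.2 → pairMem M k x ∨ pairMem M l x)
    (holdq : ∀ x, x = q.1 ∨ x = q.2 → pairMem M k x ∨ pairMem M l x)
    (hphi : phiP n p + phiP n q < phiP n (M.pr k) + phiP n (M.pr l)) :
    Phi (M.upd2 k l hkl p q hp hq hpq holdp holdq) < Phi M := by
  have hpr := upd2_pr M k l hkl p q hp hq hpq holdp holdq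
  rw [Phi_decomp2 _ k l hkl, Phi_decomp2 M k l hkl, hpr k, hpr l,
    if_pos rfl, if_neg hkl, if_pos rfl]
  have hrest : ∑ j ∈ (Finset.univ.erase k).erase l,
        phiP n ((M.upd2 k l hkl p q hp hq hpq holdp holdq).pr j)
      = ∑ j ∈ (Finset.univ.erase k).erase l, phiP n (M.pr j) :=
    Finset.sum_congr rfl fun j hj => by
      have hjl := (Finset.mem_erase.mp hj).1
      have hjk := (Finset.mem_erase.mp (Finset.mem_erase.mp hj).2).1
      rw [hpr j, if_neg hjl, if_neg hjk]
  rw [hrest]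
  omega

lemma rewrite_of_not_std (M : Mch n d) (h : ¬ Std M) :
    ∃ M₁ M₂ : Mch n d, mpoly K M = mpoly K M₁ - mpoly K M₂
      ∧ Phi M₁ < Phi M ∧ Phi M₂ < Phi M := by
  rw [Std, not_and_or] at h
  rcases h with h | h
  · -- misalignment: use the Pluecker swap
    push_neg at h
    obtain ⟨k, l, hmin, hmax⟩ := h
    have hkl : k ≠ l := fun hh => by rw [hh] at hmin; exact lt_irrefl _ hmin
    have hmax' : (M.pr l).2 < (M.pr k).2 :=
      lt_of_le_of_ne hmax (fun hh => hkl (M.maxInj hh).symm)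
    set w := (M.pr k).1
    set x := (M.pr l).1
    set y := (M.pr l).2
    set z := (M.pr k).2
    have hxy : x < y := M.lt l
    have hwx : w < x := hmin
    have hyz : y < z := hmax'
    have hwz : w < z := M.lt k
    have hwy : w < y := hwx.trans hxy
    have hxz : x < z := hxy.trans hyz
    have holdp1 : ∀ v : Fin n, v = w ∨ v = y → pairMem M k v ∨ pairMem M l v := by
      rintro v (rfl | rfl)
      · exact Or.inl (Or.inl rfl)
      · exact Or.inr (Or.inr rfl)
    have holdq1 : ∀ v : Fin n, v = x ∨ v = z → pairMem M k v ∨ pairMem M l v := by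
      rintro v (rfl | rfl)
      · exact Or.inr (Or.inl rfl)
      · exact Or.inl (Or.inr rfl)
    have holdp2 : ∀ v : Fin n, v = w ∨ v = x → pairMem M k v ∨ pairMem M l v := by
      rintro v (rfl | rfl)
      · exact Or.inl (Or.inl rfl)
      · exact Or.inr (Or.inl rfl)
    have holdq2 : ∀ v : Fin n, v = y ∨ v = z → pairMem M k v ∨ pairMem M l v := by
      rintro v (rfl | rfl)
      · exact Or.inr (Or.inr rfl)
      · exact Or.inl (Or.inr rfl)
    refine ⟨M.upd2 k l hkl (w, y) (x, z) hwy hxz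
        ⟨hwx.ne, hwz.ne, hxy.ne', hyz.ne⟩ holdp1 holdq1,
      M.upd2 k l hkl (w, x) (y, z) hwx hyz
        ⟨hwy.ne, hwz.ne, hxy.ne, hxz.ne⟩ holdp2 holdq2, ?_, ?_, ?_⟩
    · rw [mpoly_upd2, mpoly_upd2, mpoly_decomp2 K M k l hkl]
      ring
    · exact phi_upd2 _ _ _ _ _ _ _ _ _ _ _ (phiP_swap hwx hxy hyz)
    · exact phi_upd2 _ _ _ _ _ _ _ _ _ _ _ (phiP_uncross hwx hxy hyz)
  · -- a free small letter: replace the min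
    push_neg at h
    obtain ⟨k, e, helt, hefree⟩ := h
    rw [Finset.mem_union] at hefree
    push_neg at hefree
    have hfr : ∀ l, ∀ v, pairMem M l v → e ≠ v := by
      intro l v hv heq
      rcases hv with hv | hv
      · exact hefree.2 (by rw [Mch.minSet, Finset.mem_image]; exact ⟨l, Finset.mem_univ _, (heq.trans hv).symm⟩)
      · exact hefree.1 (by rw [Mch.maxSet, Finset.mem_image]; exact ⟨l, Finset.mem_univ _, (heq.trans hv).symm⟩)
    set a := (M.pr k).1
    set b := (M.pr k).2
    have hab : a < b := M.lt k
    have heb : e < b := helt.trans hab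
    have hfr1 : ∀ l, l ≠ k → ∀ v, pairMem M l v → ((e, b).1 : Fin n) ≠ v ∧ ((e, b).2 : Fin n) ≠ v := by
      intro l hl v hv
      exact ⟨hfr l v hv, Mch.ne_of_pairMem (Ne.symm hl) (Or.inr rfl) hv⟩
    have hfr2 : ∀ l, l ≠ k → ∀ v, pairMem M l v → ((e, a).1 : Fin n) ≠ v ∧ ((e, a).2 : Fin n) ≠ v := by
      intro l hl v hv
      exact ⟨hfr l v hv, Mch.ne_of_pairMem (Ne.symm hl) (Or.inl rfl) hv⟩
    refine ⟨M.upd1 k (e, b) heb hfr1, M.upd1 k (e, a) helt hfr2, ?_, ?_, ?_⟩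
    · rw [mpoly_upd1, mpoly_upd1, mpoly_decomp K M k]
      ring
    · refine phi_upd1 _ _ _ _ _ (phiP_lt_min rfl helt)
    · refine phi_upd1 _ _ _ _ _ (phiP_lt_primary (show ((a : ℕ)) < ((b : ℕ)) from hab))

theorem straighten (M : Mch n d) :
    mpoly K M ∈ Submodule.span K {p | ∃ M' : Mch n d, Std M' ∧ p = mpoly K M'} := by
  set W := Submodule.span K {p | ∃ M' : Mch n d, Std M' ∧ p = mpoly K M'} with hW
  suffices h : ∀ N : ℕ, ∀ M' : Mch n d, Phi M' ≤ N → mpoly K M' ∈ W by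
    exact h (Phi M) M le_rfl
  intro N
  induction N with
  | zero =>
    intro M' hM'
    by_cases hstd : Std M'
    · exact Submodule.subset_span ⟨M', hstd, rfl⟩
    · obtain ⟨M₁, M₂, heq, h1, h2⟩ := rewrite_of_not_std K M' hstd
      omega
  | succ N ih =>
    intro M' hM'
    by_cases hstd : Std M'
    · exact Submodule.subset_span ⟨M', hstd, rfl⟩
    · obtain ⟨M₁, M₂, heq, h1, h2⟩ := rewrite_of_not_std K M' hstd
      rw [heq]
      exact Submodule.sub_mem W (ih M₁ (by omega)) (ih M₂ (by omega))

/-! ### standard matchings and standard tableaux -/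

lemma strictMono_eq_of_image_eq {f g : Fin d → Fin n} (hf : StrictMono f) (hg : StrictMono g)
    (h : Finset.image f Finset.univ = Finset.image g Finset.univ) : f = g := by
  have hcard : (Finset.image f Finset.univ).card = d := by
    rw [Finset.card_image_of_injective _ hf.injective, Finset.card_univ, Fintype.card_fin]
  have h1 : f = ⇑((Finset.image f Finset.univ).orderEmbOfFin hcard) :=
    Finset.orderEmbOfFin_unique hcard
      (fun x => Finset.mem_image_of_mem f (Finset.mem_univ x)) hf
  have h2 : g = ⇑((Finset.image f Finset.univ).orderEmbOfFin hcard) :=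
    Finset.orderEmbOfFin_unique hcard
      (fun x => h ▸ Finset.mem_image_of_mem g (Finset.mem_univ x)) hg
  rw [h1, h2]

lemma image_orderEmbOfFin {S : Finset (Fin n)} {k : ℕ} (h : S.card = k) :
    Finset.image (⇑(S.orderEmbOfFin h)) Finset.univ = S := by
  apply Finset.coe_injective
  rw [Finset.coe_image, Finset.coe_univ, Set.image_univ, Finset.range_orderEmbOfFin]

/-- the first `dd` elements of `T` are the unique downward-closed subset of size `dd` -/
lemma firstSeg {T A : Finset (Fin n)} (hAT : A ⊆ T) {dd nn : ℕ} (hA : A.card = dd)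
    (hT : T.card = nn) (hle : dd ≤ nn)
    (hdown : ∀ a ∈ A, ∀ x ∈ T, x < a → x ∈ A) :
    A = Finset.image (fun j : Fin dd => T.orderEmbOfFin hT (Fin.castLE hle j))
      Finset.univ := by
  set F : Fin dd → Fin n := fun j => T.orderEmbOfFin hT (Fin.castLE hle j) with hF
  have hFinj : Function.Injective F := fun a b hab =>
    Fin.castLE_injective hle ((T.orderEmbOfFin hT).injective hab)
  have key : ∀ m : ℕ, ∀ hm : m < dd, F ⟨m, hm⟩ ∈ A := by
    intro m
    induction m using Nat.strong_induction_on with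
    | _ m ih =>
      intro hm
      set prev : Finset (Fin n) :=
        Finset.image F (Finset.univ.filter (fun i : Fin dd => (i : ℕ) < m)) with hprev
      have hprevcard : prev.card ≤ m := by
        calc prev.card ≤ (Finset.univ.filter (fun i : Fin dd => (i : ℕ) < m)).card :=
              Finset.card_image_le
          _ ≤ (Finset.range m).card := by
              refine Finset.card_le_card_of_injOn (fun i => (i : ℕ)) ?_ ?_
              · intro i hi
                rw [Finset.mem_coe, Finset.mem_filter] at hi
                rw [Finset.mem_coe, Finset.mem_range]
                exact hi.2
              · intro i _ j _ hij
                exact Fin.val_injective hij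
          _ = m := Finset.card_range m
      have hnotsub : ¬ A ⊆ prev := by
        intro hsub
        have := Finset.card_le_card hsub
        omega
      obtain ⟨a, haA, hanp⟩ := Finset.not_subset.mp hnotsub
      have haT : a ∈ T := hAT haA
      have : a ∈ (↑T : Set (Fin n)) := haT
      rw [← Finset.range_orderEmbOfFin T hT] at this
      obtain ⟨i₀, hi₀⟩ := this
      have hm_le : m ≤ (i₀ : ℕ) := by
        by_contra hlt
        push_neg at hlt
        have hi₀d : (i₀ : ℕ) < dd := lt_trans hlt hm
        have : F ⟨(i₀ : ℕ), hi₀d⟩ = a := by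
          rw [hF, ← hi₀]
          show (T.orderEmbOfFin hT) (Fin.castLE hle ⟨(i₀ : ℕ), hi₀d⟩) = (T.orderEmbOfFin hT) i₀
          congr 1
        apply hanp
        rw [hprev, Finset.mem_image]
        exact ⟨⟨(i₀ : ℕ), hi₀d⟩, Finset.mem_filter.mpr ⟨Finset.mem_univ _, hlt⟩, this⟩
      have hFa : F ⟨m, hm⟩ ≤ a := by
        rw [hF, ← hi₀]
        exact (T.orderEmbOfFin hT).monotone (by
          show ((Fin.castLE hle ⟨m, hm⟩ : Fin nn) : ℕ) ≤ (i₀ : ℕ)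
          simpa using hm_le)
      rcases lt_or_eq_of_le hFa with hlt | heq
      · exact hdown a haA _ (Finset.orderEmbOfFin_mem T hT _) hlt
      · rw [heq]; exact haA
  have hsub : Finset.image F Finset.univ ⊆ A := by
    intro x hx
    rw [Finset.mem_image] at hx
    obtain ⟨j, _, rfl⟩ := hx
    exact key (j : ℕ) j.isLt
  refine (Finset.eq_of_subset_of_card_le hsub ?_).symm
  rw [Finset.card_image_of_injective _ hFinj, Finset.card_univ, Fintype.card_fin]
  omega

lemma compl_card (S : Finset (Fin n)) (hS : S.card = d) : Sᶜ.card = n - d := by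
  rw [Finset.card_compl, hS, Fintype.card_fin]

/-- the standard tableau with bottom row `S` -/
noncomputable def tabOf (h2 : d ≤ n - d) (S : Finset (Fin n)) (hS : S.card = d) :
    TwoRowTab n (n - d) d Finset.univ where
  hba := h2
  top := fun j => Sᶜ.orderEmbOfFin (compl_card S hS) j
  bot := fun k => S.orderEmbOfFin hS k
  inj := by
    rintro (a | a) (b | b) h <;> simp only [Sum.elim_inl, Sum.elim_inr] at h
    · rw [(Sᶜ.orderEmbOfFin (compl_card S hS)).injective h]
    · exact absurd (h ▸ Finset.orderEmbOfFin_mem Sᶜ (compl_card S hS) a)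
        (by simp [Finset.mem_compl, Finset.orderEmbOfFin_mem S hS b])
    · exact absurd (h.symm ▸ Finset.orderEmbOfFin_mem Sᶜ (compl_card S hS) b)
        (by simp [Finset.mem_compl, Finset.orderEmbOfFin_mem S hS a])
    · rw [(S.orderEmbOfFin hS).injective h]
  range_eq := by
    intro s
    constructor
    · intro _
      by_cases hs : s ∈ S
      · have : s ∈ (↑S : Set (Fin n)) := hs
        rw [← Finset.range_orderEmbOfFin S hS] at this
        obtain ⟨k, hk⟩ := this
        exact ⟨Sum.inr k, hk⟩
      · have : s ∈ (↑(Sᶜ) : Set (Fin n)) := Finset.mem_compl.mpr hs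
        rw [← Finset.range_orderEmbOfFin Sᶜ (compl_card S hS)] at this
        obtain ⟨k, hk⟩ := this
        exact ⟨Sum.inl k, hk⟩
    · exact fun _ => Finset.mem_univ s

lemma tabOf_image_bot (h2 : d ≤ n - d) (S : Finset (Fin n)) (hS : S.card = d) :
    Finset.image (tabOf h2 S hS).bot Finset.univ = S := image_orderEmbOfFin hS

/-- the main bridge: a standard matching gives a standard tableau with the same
Specht polynomial -/
lemma std_to_tab (h2 : d ≤ n - d) (M : Mch n d) (hM : Std M) :
    IsStandard2 (tabOf h2 M.maxSet M.card_maxSet) ∧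
    spechtPoly K (tabOf h2 M.maxSet M.card_maxSet) = mpoly K M := by
  set S := M.maxSet with hSdef
  set hS := M.card_maxSet
  set T := tabOf h2 S hS with hT
  have htop : T.top = fun j => Sᶜ.orderEmbOfFin (compl_card S hS) j := rfl
  have hbot : T.bot = fun k => S.orderEmbOfFin hS k := rfl
  -- the permutation matching the enumeration of S with the pairs of M
  have hmem : ∀ k, (M.pr k).2 ∈ S := fun k =>
    Finset.mem_image_of_mem _ (Finset.mem_univ k)
  set σ : Fin d → Fin d := fun k => (S.orderIsoOfFin hS).symm ⟨(M.pr k).2, hmem k⟩ with hσ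
  have hbotσ : ∀ k, T.bot (σ k) = (M.pr k).2 := by
    intro k
    rw [hbot]
    show (S.orderEmbOfFin hS) (σ k) = _
    rw [← Finset.coe_orderIsoOfFin_apply, hσ]
    rw [OrderIso.apply_symm_apply]
  have hσinj : Function.Injective σ := by
    intro k l h
    apply M.maxInj
    have := congrArg (fun t => ((S.orderIsoOfFin hS) t : Fin n)) h
    simpa [hσ, OrderIso.apply_symm_apply] using this
  have hσbij := Finite.injective_iff_bijective.mp hσinj
  set σe : Fin d ≃ Fin d := Equiv.ofBijective σ hσbij with hσe
  have hσe_apply : ∀ k, σe k = σ k := fun k => rfl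
  have alignIff : ∀ k l, (M.pr k).1 < (M.pr l).1 ↔ (M.pr k).2 < (M.pr l).2 := by
    intro k l
    constructor
    · exact hM.1 k l
    · intro h
      rcases lt_trichotomy ((M.pr k).1) ((M.pr l).1) with h1 | h1 | h1
      · exact h1
      · have hkl : k = l := M.minInj h1
        subst hkl
        exact absurd h (lt_irrefl _)
      · exact absurd (hM.1 l k h1) (by omega)
  set G : Fin d → Fin n := fun j => (M.pr (σe.symm j)).1 with hG
  have hGmono : StrictMono G := by
    intro j j' hjj
    rw [hG]
    rw [alignIff]
    have h1 : T.bot j < T.bot j' := by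
      rw [hbot]
      exact (S.orderEmbOfFin hS).strictMono hjj
    have h2 : ∀ j, T.bot j = (M.pr (σe.symm j)).2 := by
      intro j
      have := hbotσ (σe.symm j)
      rwa [show σ (σe.symm j) = j from σe.apply_symm_apply j] at this
    rwa [h2 j, h2 j'] at h1
  set F : Fin d → Fin n := fun j => Sᶜ.orderEmbOfFin (compl_card S hS) (Fin.castLE h2 j)
    with hF
  have hFmono : StrictMono F := fun a b hab =>
    (Sᶜ.orderEmbOfFin (compl_card S hS)).strictMono (by simpa using hab)
  have hminS : M.minSet = Finset.image F Finset.univ := by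
    refine firstSeg ?_ M.card_minSet (compl_card S hS) h2 ?_
    · intro x hx
      exact Finset.mem_compl.mpr (M.minSet_disj_maxSet x hx)
    · intro a ha x hx hxa
      rw [Mch.minSet, Finset.mem_image] at ha
      obtain ⟨k, _, rfl⟩ := ha
      have := hM.2 k x hxa
      rw [Finset.mem_union] at this
      rcases this with h | h
      · exact absurd h (Finset.mem_compl.mp hx)
      · exact h
  have hGimage : Finset.image G Finset.univ = M.minSet := by
    rw [hG, Mch.minSet]
    have : (fun j => (M.pr (σe.symm j)).1)
        = (fun k => (M.pr k).1) ∘ (⇑σe.symm) := rfl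
    rw [this, ← Finset.image_image, Finset.image_univ_equiv]
  have hFG : G = F := strictMono_eq_of_image_eq hGmono hFmono (by rw [hGimage, hminS])
  have hcol : ∀ j : Fin d, T.top (Fin.castLE T.hba j) = (M.pr (σe.symm j)).1 := by
    intro j
    have : T.top (Fin.castLE T.hba j) = F j := rfl
    rw [this, ← hFG, hG]
  have hbot2 : ∀ j, T.bot j = (M.pr (σe.symm j)).2 := by
    intro j
    have := hbotσ (σe.symm j)
    rwa [show σ (σe.symm j) = j from σe.apply_symm_apply j] at this
  constructor
  · refine ⟨?_, ?_, ?_⟩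
    · rw [htop]
      exact fun a b hab => (Sᶜ.orderEmbOfFin (compl_card S hS)).strictMono hab
    · rw [hbot]
      exact fun a b hab => (S.orderEmbOfFin hS).strictMono hab
    · intro k
      rw [hcol k, hbot2 k]
      exact M.lt (σe.symm k)
  · rw [spechtPoly, mpoly]
    calc (∏ k : Fin d, (X (T.top (Fin.castLE T.hba k)) - X (T.bot k))
          : MvPolynomial (Fin n) K)
        = ∏ k : Fin d, (X ((M.pr (σe.symm k)).1) - X ((M.pr (σe.symm k)).2)) :=
          Finset.prod_congr rfl fun k _ => by rw [hcol k, hbot2 k]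
      _ = ∏ k : Fin d, (X ((M.pr k).1) - X ((M.pr k).2)) :=
          Equiv.prod_comp σe.symm
            (fun k => (X ((M.pr k).1) - X ((M.pr k).2) : MvPolynomial (Fin n) K))

lemma tabOf_congr (h2 : d ≤ n - d) {S S' : Finset (Fin n)} (hS : S.card = d)
    (hS' : S'.card = d) (h : S = S') : tabOf h2 S hS = tabOf h2 S' hS' := by
  subst h
  rfl

/-! ### from standard tableaux to matchings -/

variable {h2' : d ≤ n - d}

/-- the matching underlying a standard tableau -/
def mchOfStd (T : TwoRowTab n (n - d) d Finset.univ) (hstd : IsStandard2 T) : Mch n d where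
  pr := fun k => (T.top (Fin.castLE T.hba k), T.bot k)
  lt := fun k => hstd.2.2 k
  disj := by
    intro k l hkl x hx
    have htopinj : ∀ a b, T.top a = T.top b → a = b := by
      intro a b h
      have := T.inj (show Sum.elim T.top T.bot (Sum.inl a) = Sum.elim T.top T.bot (Sum.inl b)
        from h)
      simpa using this
    have hbotinj : ∀ a b, T.bot a = T.bot b → a = b := by
      intro a b h
      have := T.inj (show Sum.elim T.top T.bot (Sum.inr a) = Sum.elim T.top T.bot (Sum.inr b)
        from h)
      simpa using this
    have htopbot : ∀ (a : Fin (n - d)) (b : Fin d), T.top a ≠ T.bot b := by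
      intro a b h
      have := T.inj (show Sum.elim T.top T.bot (Sum.inl a) = Sum.elim T.top T.bot (Sum.inr b)
        from h)
      simpa using this
    rcases hx with h | h <;> simp only at h <;> subst h
    · constructor
      · intro h
        exact hkl (Fin.castLE_injective T.hba (htopinj _ _ h))
      · exact htopbot _ _
    · constructor
      · intro h
        exact htopbot _ _ h.symm
      · intro h
        exact hkl (hbotinj _ _ h)

lemma mpoly_mchOfStd (T : TwoRowTab n (n - d) d Finset.univ) (hstd : IsStandard2 T) :
    mpoly K (mchOfStd T hstd) = spechtPoly K T := by
  rw [mpoly, spechtPoly]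
  exact Finset.prod_congr rfl fun k _ => rfl

lemma maxSet_mchOfStd (T : TwoRowTab n (n - d) d Finset.univ) (hstd : IsStandard2 T) :
    (mchOfStd T hstd).maxSet = Finset.image T.bot Finset.univ := by
  rw [Mch.maxSet]
  rfl

lemma tab_ext (T T' : TwoRowTab n (n - d) d Finset.univ) (htop : T.top = T'.top)
    (hbot : T.bot = T'.bot) : T = T' := by
  obtain ⟨hba, top, bot, inj, range_eq⟩ := T
  obtain ⟨hba', top', bot', inj', range_eq'⟩ := T'
  simp only at htop hbot
  subst htop
  subst hbot
  rfl

lemma image_top_compl (T : TwoRowTab n (n - d) d Finset.univ) :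
    Finset.image T.top Finset.univ = (Finset.image T.bot Finset.univ)ᶜ := by
  ext s
  rw [Finset.mem_compl, Finset.mem_image, Finset.mem_image]
  constructor
  · rintro ⟨a, _, rfl⟩ ⟨b, _, hb⟩
    have := T.inj (show Sum.elim T.top T.bot (Sum.inl a) = Sum.elim T.top T.bot (Sum.inr b)
      from hb.symm)
    simp at this
  · intro hs
    have := (T.range_eq s).mp (Finset.mem_univ s)
    obtain ⟨x, hx⟩ := this
    rcases x with a | b
    · exact ⟨a, Finset.mem_univ a, hx⟩
    · exact absurd ⟨b, Finset.mem_univ b, hx⟩ hs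

/-! ### arbitrary tableaux give matchings up to sign -/

lemma tab_top_ne_bot (T : TwoRowTab n (n - d) d Finset.univ) (a : Fin (n - d)) (b : Fin d) :
    T.top a ≠ T.bot b := by
  intro h
  have := T.inj (show Sum.elim T.top T.bot (Sum.inl a) = Sum.elim T.top T.bot (Sum.inr b)
    from h)
  simpa using this

lemma tab_top_inj (T : TwoRowTab n (n - d) d Finset.univ) {a b : Fin (n - d)}
    (h : T.top a = T.top b) : a = b := by
  have := T.inj (show Sum.elim T.top T.bot (Sum.inl a) = Sum.elim T.top T.bot (Sum.inl b)
    from h)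
  simpa using this

lemma tab_bot_inj (T : TwoRowTab n (n - d) d Finset.univ) {a b : Fin d}
    (h : T.bot a = T.bot b) : a = b := by
  have := T.inj (show Sum.elim T.top T.bot (Sum.inr a) = Sum.elim T.top T.bot (Sum.inr b)
    from h)
  simpa using this

lemma specht_mem_span (T : TwoRowTab n (n - d) d Finset.univ) :
    spechtPoly K T ∈ Submodule.span K {p | ∃ M : Mch n d, Std M ∧ p = mpoly K M} := by
  classical
  set P : Fin d → Fin n × Fin n := fun k =>
    if T.top (Fin.castLE T.hba k) < T.bot k then (T.top (Fin.castLE T.hba k), T.bot k)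
    else (T.bot k, T.top (Fin.castLE T.hba k)) with hP
  have hPmem : ∀ k x, (x = (P k).1 ∨ x = (P k).2) ↔
      (x = T.top (Fin.castLE T.hba k) ∨ x = T.bot k) := by
    intro k x
    by_cases h : T.top (Fin.castLE T.hba k) < T.bot k
    · simp [hP, if_pos h]
    · simp [hP, if_neg h, or_comm]
  have hlt : ∀ k, (P k).1 < (P k).2 := by
    intro k
    by_cases h : T.top (Fin.castLE T.hba k) < T.bot k
    · rw [hP]; simp only [if_pos h]; exact h
    · rw [hP]; simp only [if_neg h]
      exact lt_of_le_of_ne (not_lt.mp h) (Ne.symm (tab_top_ne_bot T _ _))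
  set M : Mch n d := ⟨P, hlt, by
    intro k l hkl x hx
    suffices hs : ∀ y, (y = (P l).1 ∨ y = (P l).2) → x ≠ y by
      exact ⟨hs _ (Or.inl rfl), hs _ (Or.inr rfl)⟩
    intro y hy
    rw [hPmem] at hx hy
    rcases hx with rfl | rfl <;> rcases hy with rfl | rfl
    · exact fun h => hkl (Fin.castLE_injective T.hba (tab_top_inj T h))
    · exact tab_top_ne_bot T _ _
    · exact fun h => tab_top_ne_bot T _ _ h.symm
    · exact fun h => hkl (tab_bot_inj T h)⟩ with hM
  set e : Fin d → K := fun k => if T.top (Fin.castLE T.hba k) < T.bot k then 1 else -1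
    with he
  have hfac : ∀ k, (X (T.top (Fin.castLE T.hba k)) - X (T.bot k) : MvPolynomial (Fin n) K)
      = C (e k) * (X ((P k).1) - X ((P k).2)) := by
    intro k
    by_cases h : T.top (Fin.castLE T.hba k) < T.bot k
    · rw [he]; simp only [if_pos h]
      rw [hP]; simp only [if_pos h]
      rw [map_one, one_mul]
    · rw [he]; simp only [if_neg h]
      rw [hP]; simp only [if_neg h]
      rw [map_neg, map_one]
      ring
  have hiden : spechtPoly K T = (∏ k, e k) • mpoly K M := by
    rw [MvPolynomial.smul_eq_C_mul, map_prod, spechtPoly, mpoly, ← Finset.prod_mul_distrib]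
    exact Finset.prod_congr rfl fun k _ => hfac k
  rw [hiden]
  exact Submodule.smul_mem _ _ (straighten K M)

end Sp

/-- every nonzero element `f` of the Specht module `V_{(n-d,d)}`
(the `K`-span of the Specht polynomials of shape `(n-d, d)`) has an initial monomial,
and there is a unique standard tableau `T` of shape `(n-d, d)` with
`init f = init (f_T)` (lexicographic order with `x_n ≻ ⋯ ≻ x_1`). -/
theorem initMonomial_mem_spechtModule (K : Type) [Field K] (n d : ℕ) (h1 : 1 ≤ d)
    (h2 : d ≤ n - d) (f : MvPolynomial (Fin n) K)
    (hf : f ∈ Submodule.span K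
      (Set.range (fun T : TwoRowTab n (n - d) d Finset.univ => spechtPoly K T)))
    (hf0 : f ≠ 0) :
    ∃ m : Fin n →₀ ℕ, IsInitMonomial f m ∧
      ∃! T : TwoRowTab n (n - d) d Finset.univ,
        IsStandard2 T ∧ IsInitMonomial (spechtPoly K T) m := by
  classical
  have hfW : f ∈ Submodule.span K {p | ∃ M : Sp.Mch n d, Sp.Std M ∧ p = Sp.mpoly K M} := by
    refine Submodule.span_le.mpr ?_ hf
    rintro p ⟨T, rfl⟩
    exact Sp.specht_mem_span K T
  obtain ⟨c, hcsub, hcsum⟩ := Submodule.mem_span_set.mp hfW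
  have hex : ∀ p ∈ c.support, ∃ M : Sp.Mch n d, Sp.Std M ∧ p = Sp.mpoly K M :=
    fun p hp => hcsub hp
  have hfsum : f = ∑ p ∈ c.support, c p • p := by rw [← hcsum]; rfl
  have hne : c.support.Nonempty := by
    by_contra h
    rw [Finset.not_nonempty_iff_eq_empty] at h
    rw [h, Finset.sum_empty] at hfsum
    exact hf0 hfsum
  set g0 : MvPolynomial (Fin n) K → ℕ := fun p =>
    if h : ∃ M : Sp.Mch n d, Sp.Std M ∧ p = Sp.mpoly K M
    then Sp.key (Classical.choose h).maxSet else 0 with hg0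
  obtain ⟨pstar, hpstar, hmax⟩ := Finset.exists_max_image c.support g0 hne
  have hexs := hex pstar hpstar
  set Ms := Classical.choose hexs with hMs
  obtain ⟨hMsStd, hpsEq⟩ := Classical.choose_spec hexs
  set m := Sp.topMon Ms with hm
  have hg0p : ∀ p (hp : p ∈ c.support), g0 p = Sp.key (Classical.choose (hex p hp)).maxSet := by
    intro p hp
    simp only [hg0]
    rw [dif_pos (hex p hp)]
  have hg0s : g0 pstar = Sp.key Ms.maxSet := hg0p pstar hpstar
  -- the support of f is contained in the supports of the standard pieces
  have hsupp : ∀ m' ∈ f.support, ∃ p, ∃ hp : p ∈ c.support, m' ∈ p.support := by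
    intro m' hm'
    rw [hfsum] at hm'
    have := MvPolynomial.support_sum hm'
    rw [Finset.mem_biUnion] at this
    obtain ⟨p, hp, hmp⟩ := this
    exact ⟨p, hp, Finsupp.support_smul hmp⟩
  have hinit : IsInitMonomial f m := by
    constructor
    · rw [MvPolynomial.mem_support_iff, hfsum, MvPolynomial.coeff_sum]
      have hzero : ∀ p ∈ c.support, p ≠ pstar → MvPolynomial.coeff m (c p • p) = 0 := by
        intro p hp hne'
        rw [MvPolynomial.coeff_smul]
        have hMp := Classical.choose_spec (hex p hp)
        set Mp := Classical.choose (hex p hp) with hMpdef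
        obtain ⟨hMpStd, hpEq⟩ := hMp
        by_contra hco
        have hco' : MvPolynomial.coeff m p ≠ 0 := by
          intro h0
          rw [h0, smul_zero] at hco
          exact hco rfl
        have hmem : m ∈ (Sp.mpoly K Mp).support := by
          rw [← hpEq, MvPolynomial.mem_support_iff]
          exact hco'
        obtain ⟨A, hmA, hle', hlt'⟩ := Sp.supp_mpoly_bound K Mp hmem
        by_cases hcase : m = Sp.topMon Mp
        · have hsets : Mp.maxSet = Ms.maxSet := by
            apply Sp.monOf_inj
            rw [← Sp.topMon, ← Sp.topMon, ← hcase, hm]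
          apply hne'
          rw [hpEq, hpsEq,
            ← (Sp.std_to_tab K h2 Mp hMpStd).2, ← (Sp.std_to_tab K h2 Ms hMsStd).2,
            Sp.tabOf_congr h2 Mp.card_maxSet Ms.card_maxSet hsets]
        · have h1 : Sp.key A < Sp.key Mp.maxSet := hlt' hcase
          have h2' : Sp.key Mp.maxSet ≤ Sp.key Ms.maxSet := by
            rw [← hg0s, ← hg0p p hp]
            exact hmax p hp
          have hAeq : A = Ms.maxSet := by
            apply Sp.monOf_inj
            rw [← hmA, hm, Sp.topMon]
          rw [hAeq] at h1
          omega
      rw [Finset.sum_eq_single_of_mem pstar hpstar hzero, MvPolynomial.coeff_smul]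
      have hcps : MvPolynomial.coeff m pstar = (-1) ^ d := by
        rw [hpsEq, hm, Sp.coeff_topMon]
      rw [hcps, smul_eq_mul]
      exact mul_ne_zero (Finsupp.mem_support_iff.mp hpstar)
        (pow_ne_zero _ (neg_ne_zero.mpr one_ne_zero))
    · intro m' hm' hne'
      obtain ⟨p, hp, hmp⟩ := hsupp m' hm'
      have hMp := Classical.choose_spec (hex p hp)
      set Mp := Classical.choose (hex p hp) with hMpdef
      obtain ⟨hMpStd, hpEq⟩ := hMp
      have hmem : m' ∈ (Sp.mpoly K Mp).support := by rw [← hpEq]; exact hmp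
      obtain ⟨A, hmA, hle', _⟩ := Sp.supp_mpoly_bound K Mp hmem
      have h2' : Sp.key Mp.maxSet ≤ Sp.key Ms.maxSet := by
        rw [← hg0s, ← hg0p p hp]
        exact hmax p hp
      have hAne : A ≠ Ms.maxSet := by
        intro h
        apply hne'
        rw [hmA, h, hm, Sp.topMon]
      have hkeylt : Sp.key A < Sp.key Ms.maxSet :=
        lt_of_le_of_ne (le_trans hle' h2') (Sp.key_ne hAne)
      rw [hmA, hm, Sp.topMon]
      exact Sp.keyLt_to_lex hAne hkeylt
  obtain ⟨hTstd, hTeq⟩ := Sp.std_to_tab K h2 Ms hMsStd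
  refine ⟨m, hinit, Sp.tabOf h2 Ms.maxSet Ms.card_maxSet, ⟨hTstd, ?_⟩, ?_⟩
  · rw [hTeq, hm]
    exact Sp.isInit_mpoly K Ms
  · rintro T' ⟨hstd', hinit'⟩
    have hpoly' : Sp.mpoly K (Sp.mchOfStd T' hstd') = spechtPoly K T' :=
      Sp.mpoly_mchOfStd K T' hstd'
    have hinitM' : IsInitMonomial (spechtPoly K T') (Sp.topMon (Sp.mchOfStd T' hstd')) := by
      rw [← hpoly']
      exact Sp.isInit_mpoly K _
    have hmm : m = Sp.topMon (Sp.mchOfStd T' hstd') := Sp.initMonomial_unique hinit' hinitM'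
    have hsets : (Sp.mchOfStd T' hstd').maxSet = Ms.maxSet := by
      apply Sp.monOf_inj
      rw [← Sp.topMon, ← Sp.topMon, ← hmm, hm]
    have hbotimg : Finset.image T'.bot Finset.univ
        = Finset.image (Sp.tabOf h2 Ms.maxSet Ms.card_maxSet).bot Finset.univ := by
      rw [Sp.tabOf_image_bot, ← hsets, Sp.maxSet_mchOfStd]
    have hbot : T'.bot = (Sp.tabOf h2 Ms.maxSet Ms.card_maxSet).bot :=
      Sp.strictMono_eq_of_image_eq hstd'.2.1 hTstd.2.1 hbotimg
    have htopimg : Finset.image T'.top Finset.univ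
        = Finset.image (Sp.tabOf h2 Ms.maxSet Ms.card_maxSet).top Finset.univ := by
      rw [Sp.image_top_compl, Sp.image_top_compl, hbotimg]
    have htop : T'.top = (Sp.tabOf h2 Ms.maxSet Ms.card_maxSet).top :=
      Sp.strictMono_eq_of_image_eq hstd'.1 hTstd.1 htopimg
    exact Sp.tab_ext T' _ htop hbot
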